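/- Let g : ℝⁿ → ℝ be continuous and bounded, let η : [0,∞) → ℝ be continuous with η(t) ≤ −αt for all t ≥ 0 and some α > 0, let f : ℝⁿ → ℝ be continuous and bounded, and let Y_k → Y uniformly on compacts with hitting times τ(Y_k) → τ(Y) ∈ [0,∞] of the complement of the closure of an open set D (as above). Then ∫₀^{τ(Y_k)} f(Y_k(t)) e^{η(t)} dt → ∫₀^{τ(Y)} f(Y(t)) e^{η(t)} dt as k → ∞ (where the integral over [0,∞) is absolutely convergent since |f(Y(t))e^{η(t)}| ≤ ‖f‖_∞ e^{-αt}). -/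

import Mathlib

open Filter Topology MeasureTheory Real
open scoped ENNReal

/-- The exit time of a path `Z` from the closure of `D`, as an extended nonnegative real
(`∞` if the path never leaves `closure D`). -/
noncomputable def hitTime {n : ℕ} (D : Set (EuclideanSpace ℝ (Fin n)))
    (Z : ℝ → EuclideanSpace ℝ (Fin n)) : ℝ≥0∞ :=
  sInf (ENNReal.ofReal '' {t : ℝ | 0 ≤ t ∧ Z t ∉ closure D})

/-- The time interval `[0, τ)` for an extended-real time `τ` (all of `[0,∞)` if `τ = ∞`). -/
def timeSet (τ : ℝ≥0∞) : Set ℝ := {t : ℝ | 0 ≤ t ∧ ENNReal.ofReal t < τ}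

lemma mem_timeSet {τ : ℝ≥0∞} {t : ℝ} : t ∈ timeSet τ ↔ 0 ≤ t ∧ ENNReal.ofReal t < τ :=
  Iff.rfl

/-- For bounded continuous `f`, continuous `η` with `η(t) ≤ -α t`, and
continuous paths `Y_k → Y` uniformly on compacts whose exit times of `closure D` converge
(possibly to `∞`), the killed integrals converge:
`∫₀^{τ(Y_k)} f(Y_k(t)) e^{η(t)} dt → ∫₀^{τ(Y)} f(Y(t)) e^{η(t)} dt`. -/
theorem killed_integrals_converge
    (n : ℕ) (D : Set (EuclideanSpace ℝ (Fin n))) (hD : IsOpen D)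
    (α : ℝ) (hα : 0 < α)
    (η : ℝ → ℝ) (hηc : Continuous η) (hη : ∀ t ≥ (0:ℝ), η t ≤ -α * t)
    (f : EuclideanSpace ℝ (Fin n) → ℝ) (hfc : Continuous f)
    (Cf : ℝ) (hfb : ∀ x, |f x| ≤ Cf)
    (Y : ℕ → ℝ → EuclideanSpace ℝ (Fin n)) (Ylim : ℝ → EuclideanSpace ℝ (Fin n))
    (hYc : ∀ k, Continuous (Y k)) (hYlc : Continuous Ylim)
    (hconv : ∀ K : Set ℝ, IsCompact K → TendstoUniformlyOn (fun k => Y k) Ylim atTop K)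
    (hτ : Tendsto (fun k => hitTime D (Y k)) atTop (𝓝 (hitTime D Ylim))) :
    Tendsto (fun k => ∫ t in timeSet (hitTime D (Y k)), f (Y k t) * exp (η t)) atTop
      (𝓝 (∫ t in timeSet (hitTime D Ylim), f (Ylim t) * exp (η t))) := by
  have hmeas : ∀ σ : ℝ≥0∞, MeasurableSet (timeSet σ) := by
    intro σ
    have : timeSet σ = Set.Ici 0 ∩ ENNReal.ofReal ⁻¹' Set.Iio σ := rfl
    rw [this]
    exact measurableSet_Ici.inter (ENNReal.continuous_ofReal.measurable measurableSet_Iio)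
  have hCf : 0 ≤ Cf := le_trans (abs_nonneg _) (hfb 0)
  set τ := hitTime D Ylim with hτdef
  simp_rw [← MeasureTheory.integral_indicator (hmeas _)]
  apply MeasureTheory.tendsto_integral_of_dominated_convergence
    ((Set.Ici (0:ℝ)).indicator (fun t => Cf * exp (-α * t)))
  · intro k
    exact (((hfc.comp (hYc k)).mul (continuous_exp.comp hηc)).aestronglyMeasurable).indicator
      (hmeas _)
  · rw [MeasureTheory.integrable_indicator_iff measurableSet_Ici,
      integrableOn_Ici_iff_integrableOn_Ioi]
    exact (exp_neg_integrableOn_Ioi 0 hα).const_mul Cf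
  · intro k
    filter_upwards with t
    by_cases ht : t ∈ timeSet (hitTime D (Y k))
    · rw [Set.indicator_of_mem ht, Set.indicator_of_mem (Set.mem_Ici.mpr ht.1)]
      rw [Real.norm_eq_abs, abs_mul, abs_exp]
      exact mul_le_mul (hfb _) (exp_le_exp.mpr (hη t ht.1)) (exp_nonneg _) hCf
    · rw [Set.indicator_of_notMem ht, norm_zero]
      exact Set.indicator_nonneg (fun s hs => mul_nonneg hCf (exp_nonneg _)) t
  · have hS : (volume : Measure ℝ) {t : ℝ | 0 ≤ t ∧ ENNReal.ofReal t = τ} = 0 := by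
      apply Set.Subsingleton.measure_zero
      intro a ha b hb
      have := ha.2.trans hb.2.symm
      exact (ENNReal.ofReal_eq_ofReal_iff ha.1 hb.1).mp this
    filter_upwards [MeasureTheory.measure_eq_zero_iff_ae_notMem.mp hS] with t htS
    by_cases ht0 : 0 ≤ t
    · have hne : ENNReal.ofReal t ≠ τ := fun h => htS ⟨ht0, h⟩
      rcases lt_or_gt_of_ne hne with hlt | hgt
      · -- eventually in timeSet
        have hev : ∀ᶠ k in atTop, t ∈ timeSet (hitTime D (Y k)) := by
          filter_upwards [hτ.eventually (eventually_gt_nhds hlt)] with k hk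
          exact mem_timeSet.mpr ⟨ht0, hk⟩
        have hpt : Tendsto (fun k => Y k t) atTop (𝓝 (Ylim t)) :=
          (hconv {t} isCompact_singleton).tendsto_at rfl
        have hlim : Tendsto (fun k => f (Y k t) * exp (η t)) atTop
            (𝓝 (f (Ylim t) * exp (η t))) :=
          ((hfc.tendsto _).comp hpt).mul_const _
        have heq : (fun k => f (Y k t) * exp (η t)) =ᶠ[atTop]
            (fun k => (timeSet (hitTime D (Y k))).indicator
              (fun s => f (Y k s) * exp (η s)) t) := by
          filter_upwards [hev] with k hk
          rw [Set.indicator_of_mem hk]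
        rw [Set.indicator_of_mem (mem_timeSet.mpr ⟨ht0, hlt⟩)]
        exact hlim.congr' heq
      · have hev : ∀ᶠ k in atTop, t ∉ timeSet (hitTime D (Y k)) := by
          filter_upwards [hτ.eventually (eventually_lt_nhds hgt)] with k hk
          exact fun hmem => absurd (mem_timeSet.mp hmem).2 (not_lt.mpr hk.le)
        have heq : (fun k : ℕ => (0:ℝ)) =ᶠ[atTop]
            (fun k => (timeSet (hitTime D (Y k))).indicator
              (fun s => f (Y k s) * exp (η s)) t) := by
          filter_upwards [hev] with k hk
          rw [Set.indicator_of_notMem hk]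
        rw [Set.indicator_of_notMem (fun hmem => absurd (mem_timeSet.mp hmem).2 (not_lt.mpr hgt.le))]
        exact tendsto_const_nhds.congr' heq
    · have hnm : ∀ σ : ℝ≥0∞, t ∉ timeSet σ := fun σ hmem => ht0 (mem_timeSet.mp hmem).1
      simp only [Set.indicator_of_notMem (hnm _)]
      exact tendsto_const_nhds
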